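/- Define g : (−2π, 2π) → ℝ by g(r) = (r − sin r)/(8 sin²(r/2)) for r ≠ 0 and g(0) = 0. Then g is continuous, odd, strictly increasing, and maps (−2π, 2π) bijectively onto ℝ. Consequently, for every c ∈ ℝ \ {0} there is exactly one r ∈ (−2π, 2π) \ {0} with g(r) = c. -/

import Mathlib

/-- The function `g(r) = (r − sin r)/(8 sin²(r/2))` with `g(0) = 0`. -/
noncomputable def g13 (r : ℝ) : ℝ :=
  if r = 0 then 0 else (r - Real.sin r) / (8 * Real.sin (r / 2) ^ 2)

section Aux
open Real Set

noncomputable def f13 (r : ℝ) : ℝ := (r - Real.sin r) / (8 * Real.sin (r / 2) ^ 2)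

lemma half_sin (x : ℝ) : Real.sin x = 2 * Real.sin (x/2) * Real.cos (x/2) := by
  have h : 2 * (x/2) = x := by ring
  have := Real.sin_two_mul (x/2)
  rw [h] at this
  exact this

lemma half_cos (x : ℝ) : Real.cos x = 1 - 2 * Real.sin (x/2)^2 := by
  have h : 2 * (x/2) = x := by ring
  have hp := Real.sin_sq_add_cos_sq (x/2)
  have h2 := Real.cos_two_mul (x/2)
  rw [h] at h2
  rw [h2]
  nlinarith [hp]

lemma key13 {t : ℝ} (ht : 0 < t) (ht' : t < Real.pi) : t * Real.cos t < Real.sin t := by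
  have hs : 0 < Real.sin t := Real.sin_pos_of_pos_of_lt_pi ht ht'
  rcases le_or_gt (Real.cos t) 0 with hc | hc
  · nlinarith
  · have ht2 : t < Real.pi / 2 := by
      by_contra hle
      push_neg at hle
      have := Real.cos_nonpos_of_pi_div_two_le_of_le hle (by linarith [Real.pi_pos])
      linarith
    have := Real.lt_tan ht ht2
    rw [Real.tan_eq_sin_div_cos] at this
    calc t * Real.cos t < (Real.sin t / Real.cos t) * Real.cos t := by
          exact mul_lt_mul_of_pos_right this hc
      _ = Real.sin t := by field_simp

lemma sin_half_pos {x : ℝ} (hx : 0 < x) (hx' : x < 2 * Real.pi) : 0 < Real.sin (x / 2) :=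
  Real.sin_pos_of_pos_of_lt_pi (by linarith) (by linarith)

lemma hasDerivAt_f13 {x : ℝ} (hx : 0 < x) (hx' : x < 2 * Real.pi) :
    HasDerivAt f13 (((1 - Real.cos x) * (8 * Real.sin (x/2)^2) -
      (x - Real.sin x) * (8 * (2 * Real.sin (x/2) * (Real.cos (x/2) * (1/2))))) /
      (8 * Real.sin (x/2)^2)^2) x := by
  have hs : 0 < Real.sin (x/2) := sin_half_pos hx hx'
  have h1 : HasDerivAt (fun r : ℝ => r - Real.sin r) (1 - Real.cos x) x :=
    (hasDerivAt_id x).sub (Real.hasDerivAt_sin x)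
  have hhalf : HasDerivAt (fun r : ℝ => r / 2) (1/2) x := by
    simpa using (hasDerivAt_id x).div_const 2
  have hsin : HasDerivAt (fun r : ℝ => Real.sin (r/2)) (Real.cos (x/2) * (1/2)) x :=
    hhalf.sin
  have h2 : HasDerivAt (fun r : ℝ => 8 * Real.sin (r/2)^2)
      (8 * (2 * Real.sin (x/2) * (Real.cos (x/2) * (1/2)))) x := by
    simpa [mul_comm] using ((hsin.pow 2).const_mul 8)
  exact h1.div h2 (by positivity)

lemma deriv_f13_pos {x : ℝ} (hx : 0 < x) (hx' : x < 2 * Real.pi) : 0 < deriv f13 x := by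
  rw [(hasDerivAt_f13 hx hx').deriv]
  set s := Real.sin (x/2) with hs_def
  set c := Real.cos (x/2) with hc_def
  have hs : 0 < s := sin_half_pos hx hx'
  have hkey : (x/2) * c < s := key13 (by linarith) (by linarith)
  have hpyth : s^2 + c^2 = 1 := Real.sin_sq_add_cos_sq (x/2)
  have hsin : Real.sin x = 2 * s * c := half_sin x
  have hcos : Real.cos x = 1 - 2 * s^2 := half_cos x
  apply div_pos
  · rw [hsin, hcos]
    nlinarith [hkey, hs, hpyth]
  · positivity

lemma mono_pos13 : StrictMonoOn g13 (Set.Ioo 0 (2 * Real.pi)) := by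
  have heq : Set.EqOn g13 f13 (Set.Ioo 0 (2 * Real.pi)) := by
    intro x hx
    simp [g13, f13, ne_of_gt hx.1]
  apply StrictMonoOn.congr _ heq.symm
  apply strictMonoOn_of_deriv_pos (convex_Ioo _ _)
  · intro x hx
    exact ((hasDerivAt_f13 hx.1 hx.2).continuousAt).continuousWithinAt
  · intro x hx
    rw [interior_Ioo] at hx
    exact deriv_f13_pos hx.1 hx.2

lemma g13_zero : g13 0 = 0 := by simp [g13]

lemma g13_odd (r : ℝ) : g13 (-r) = -g13 r := by
  rcases eq_or_ne r 0 with h | h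
  · simp [h, g13]
  · have h' : -r ≠ 0 := neg_ne_zero.2 h
    simp only [g13, if_neg h, if_neg h']
    rw [show -r / 2 = -(r/2) by ring, Real.sin_neg, Real.sin_neg]
    ring

lemma g13_pos {r : ℝ} (hr : 0 < r) (hr' : r < 2 * Real.pi) : 0 < g13 r := by
  have hs : 0 < Real.sin (r/2) := sin_half_pos hr hr'
  rw [g13, if_neg (ne_of_gt hr)]
  apply div_pos
  · linarith [Real.sin_lt hr]
  · positivity

lemma mono13 : StrictMonoOn g13 (Set.Ioo (-(2 * Real.pi)) (2 * Real.pi)) := by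
  intro a ha b hb hab
  rcases lt_trichotomy a 0 with haz | haz | haz
  · rcases lt_trichotomy b 0 with hbz | hbz | hbz
    · have h := mono_pos13 (a := -b) (b := -a) ⟨by linarith, by linarith [ha.1]⟩
        ⟨by linarith, by linarith [ha.1]⟩ (by linarith)
      rw [g13_odd, g13_odd] at h
      linarith
    · rw [hbz, g13_zero]
      have := g13_pos (r := -a) (by linarith) (by linarith [ha.1])
      rw [g13_odd] at this; linarith
    · have h1 := g13_pos (r := -a) (by linarith) (by linarith [ha.1])
      rw [g13_odd] at h1
      have h2 := g13_pos hbz hb.2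
      linarith
  · rw [haz, g13_zero]
    exact g13_pos (by linarith) hb.2
  · exact mono_pos13 ⟨haz, ha.2⟩ ⟨by linarith, hb.2⟩ hab

lemma cont13 : ContinuousOn g13 (Set.Ioo (-(2 * Real.pi)) (2 * Real.pi)) := by
  intro x hx
  rcases eq_or_ne x 0 with rfl | hx0
  · -- continuity at 0 via squeeze
    apply ContinuousAt.continuousWithinAt
    rw [ContinuousAt, g13_zero]
    have hb : ∀ r : ℝ, |r| ≤ 1 → ‖g13 r‖ ≤ |r| := by
      intro r hr
      have hcase : ∀ u : ℝ, 0 < u → u ≤ 1 → 0 < g13 u ∧ g13 u ≤ u := by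
        intro u hu hu1
        have hu3 : u^3 ≤ u := by nlinarith [sq_nonneg u, mul_nonneg hu.le hu.le]
        have hsc := Real.sin_gt_sub_cube (x := u/2) (by linarith)
        have hs : Real.sin (u/2) ≥ 15*u/32 := by nlinarith
        have hspos : (0:ℝ) < 15*u/32 := by linarith
        have hden : 8 * Real.sin (u/2)^2 ≥ u^2 := by nlinarith
        have hdenpos : (0:ℝ) < u^2 := by positivity
        have hnum : u - Real.sin u ≤ u^3/4 := by
          have := Real.sin_gt_sub_cube hu
          linarith [pow_pos hu 3]
        have hnumpos : 0 < u - Real.sin u := by linarith [Real.sin_lt hu]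
        constructor
        · rw [g13, if_neg (ne_of_gt hu)]
          apply div_pos hnumpos (by linarith)
        · rw [g13, if_neg (ne_of_gt hu)]
          calc (u - Real.sin u) / (8 * Real.sin (u/2)^2) ≤ (u^3/4) / (u^2) := by
                apply div_le_div₀ (by positivity) hnum hdenpos hden
            _ = u/4 := by field_simp
            _ ≤ u := by linarith
      rcases lt_trichotomy r 0 with hr0 | rfl | hr0
      · have := hcase (-r) (by linarith) (by rw [abs_of_neg hr0] at hr; linarith)
        rw [g13_odd] at this
        rw [Real.norm_eq_abs, abs_of_neg (by linarith), abs_of_neg hr0]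
        linarith
      · simp [g13_zero]
      · have := hcase r hr0 (by rw [abs_of_pos hr0] at hr; linarith)
        rw [Real.norm_eq_abs, abs_of_pos this.1, abs_of_pos hr0]
        exact this.2
    apply squeeze_zero_norm' (a := fun r : ℝ => |r|)
    · filter_upwards [Metric.ball_mem_nhds (0:ℝ) one_pos] with r hr
      have : |r| < 1 := by simpa [Real.dist_eq] using hr
      exact hb r this.le
    · simpa using (continuous_abs.tendsto (0:ℝ))
  · -- continuity away from 0
    apply ContinuousAt.continuousWithinAt
    have hsne : Real.sin (x/2) ≠ 0 := by
      have := Real.sin_eq_zero_iff_of_lt_of_lt (x := x/2)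
        (by linarith [hx.1]) (by linarith [hx.2])
      intro h
      exact hx0 (by linarith [this.1 h])
    have hcA : ContinuousAt f13 x := by
      apply ContinuousAt.div
      · exact (continuous_id.sub Real.continuous_sin).continuousAt
      · exact (continuous_const.mul ((Real.continuous_sin.comp
          (continuous_id.div_const 2)).pow 2)).continuousAt
      · positivity
    apply hcA.congr
    filter_upwards [isOpen_ne.mem_nhds hx0] with r hr
    simp [g13, f13, hr]

lemma grow13 (y : ℝ) : ∃ b : ℝ, Real.pi < b ∧ b < 2 * Real.pi ∧ y < g13 b := by
  have hpi := Real.pi_gt_three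
  set δ : ℝ := min 1 (1/(|y|+1)) with hδ_def
  have hay : 0 ≤ |y| := abs_nonneg y
  have hδpos : 0 < δ := lt_min one_pos (by positivity)
  have hδ1 : δ ≤ 1 := min_le_left _ _
  have hδ2 : δ * (|y| + 1) ≤ 1 := by
    calc δ * (|y|+1) ≤ (1/(|y|+1)) * (|y|+1) := by
          apply mul_le_mul_of_nonneg_right (min_le_right _ _) (by positivity)
      _ = 1 := by field_simp
  refine ⟨2 * Real.pi - δ, by linarith, by linarith, ?_⟩
  set b : ℝ := 2 * Real.pi - δ with hb_def
  have hb0 : 0 < b := by linarith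
  have hb2 : b < 2 * Real.pi := by linarith
  have hs : 0 < Real.sin (b/2) := sin_half_pos hb0 hb2
  have hsle : Real.sin (b/2) ≤ δ/2 := by
    have h1 : Real.sin (b/2) = Real.sin (Real.pi - b/2) := (Real.sin_pi_sub _).symm
    have h2 : Real.pi - b/2 = δ/2 := by rw [hb_def]; ring
    rw [h1, h2]
    exact (Real.sin_lt (by linarith)).le
  have hden : 8 * Real.sin (b/2)^2 ≤ 2 * δ^2 := by nlinarith
  have hdenpos : 0 < 8 * Real.sin (b/2)^2 := by positivity
  have hnum : 2 ≤ b - Real.sin b := by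
    have := Real.sin_le_one b
    linarith
  rw [g13, if_neg (ne_of_gt hb0)]
  have hstep : 2 / (2 * δ^2) ≤ (b - Real.sin b) / (8 * Real.sin (b/2)^2) :=
    div_le_div₀ (by linarith) hnum hdenpos hden
  have hy : y < 2 / (2 * δ^2) := by
    rw [lt_div_iff₀ (by positivity)]
    nlinarith [abs_nonneg y, le_abs_self y, sq_nonneg δ, hδ2, hδpos]
  linarith

lemma surj13 : ∀ y : ℝ, ∃ r ∈ Set.Ioo (-(2 * Real.pi)) (2 * Real.pi), g13 r = y := by
  intro y
  obtain ⟨b, hb1, hb2, hb3⟩ := grow13 |y|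
  have hbpos : 0 < b := lt_trans Real.pi_pos hb1
  have hsub : Set.Icc (-b) b ⊆ Set.Ioo (-(2 * Real.pi)) (2 * Real.pi) := by
    intro z hz
    exact ⟨by linarith [hz.1], by linarith [hz.2]⟩
  have hcont : ContinuousOn g13 (Set.Icc (-b) b) := cont13.mono hsub
  have hmem : y ∈ Set.Icc (g13 (-b)) (g13 b) := by
    rw [g13_odd]
    constructor
    · linarith [neg_abs_le y]
    · linarith [le_abs_self y]
  obtain ⟨r, hr, hry⟩ := intermediate_value_Icc (by linarith) hcont hmem
  exact ⟨r, hsub hr, hry⟩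

end Aux

open Real Set

/-- On `(−2π, 2π)` the function `g13` is continuous, odd, strictly increasing and maps
the interval bijectively onto `ℝ`; in particular for every `c ≠ 0` there is exactly one
`r ∈ (−2π, 2π) \ {0}` with `g13 r = c`. -/
theorem stmt_13 :
    ContinuousOn g13 (Set.Ioo (-(2 * Real.pi)) (2 * Real.pi)) ∧
    (∀ r ∈ Set.Ioo (-(2 * Real.pi)) (2 * Real.pi), g13 (-r) = -g13 r) ∧
    StrictMonoOn g13 (Set.Ioo (-(2 * Real.pi)) (2 * Real.pi)) ∧
    Set.BijOn g13 (Set.Ioo (-(2 * Real.pi)) (2 * Real.pi)) Set.univ ∧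
    (∀ c : ℝ, c ≠ 0 → ∃! r : ℝ,
      r ∈ Set.Ioo (-(2 * Real.pi)) (2 * Real.pi) ∧ r ≠ 0 ∧ g13 r = c) := by
  have hinj := mono13.injOn
  refine ⟨cont13, fun r _ => g13_odd r, mono13, ⟨fun _ _ => Set.mem_univ _, hinj, ?_⟩, ?_⟩
  · intro y _
    obtain ⟨r, hr, hry⟩ := surj13 y
    exact ⟨r, hr, hry⟩
  · intro c hc
    obtain ⟨r, hr, hrc⟩ := surj13 c
    have hr0 : r ≠ 0 := by
      rintro rfl
      rw [g13_zero] at hrc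
      exact hc hrc.symm
    refine ⟨r, ⟨hr, hr0, hrc⟩, ?_⟩
    rintro s ⟨hs, _, hsc⟩
    exact hinj hs hr (hsc.trans hrc.symm)
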